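/- Let G be a graph on [n], let 𝕂 be a field, and let e = ij be an edge of G. Then e is an exposed edge of G if and only if the monomial x_i x_j is a linear divisor for the edge ideal I_{Ḡ} of the complement graph Ḡ, i.e. if and only if the colon ideal (I_{Ḡ} : x_i x_j) is generated by a subset of the variables {x_1,…,x_n}. -/

import Mathlib

open Finset MvPolynomial

/-- `S` is a clique of the `d`-clutter `C` on `[n]`: either `|S| < d` or
every `d`-subset of `S` is a circuit of `C`. -/
def IsClutterClique (n d : ℕ) (C : Finset (Finset (Fin n))) (S : Finset (Fin n)) : Prop :=
  S.card < d ∨ ∀ t : Finset (Fin n), t ⊆ S → t.card = d → t ∈ C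

/-- `S` is a maximal clique of the `d`-clutter `C`. -/
def IsMaxClutterClique (n d : ℕ) (C : Finset (Finset (Fin n))) (S : Finset (Fin n)) : Prop :=
  IsClutterClique n d C S ∧ ∀ T, IsClutterClique n d C T → S ⊆ T → S = T

/-- A circuit `e ∈ C` is exposed if it is contained in a unique maximal clique. -/
def IsExposedCircuit (n d : ℕ) (C : Finset (Finset (Fin n))) (e : Finset (Fin n)) : Prop :=
  e ∈ C ∧ ∃! S, IsMaxClutterClique n d C S ∧ e ⊆ S

/-- A circuit is properly exposed if it is exposed and the unique maximal clique
containing it has more than `d` elements. -/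
def IsProperlyExposedCircuit (n d : ℕ) (C : Finset (Finset (Fin n))) (e : Finset (Fin n)) :
    Prop :=
  IsExposedCircuit n d C e ∧ ∀ S, IsMaxClutterClique n d C S → e ⊆ S → d < S.card

/-- The complement clutter: all `d`-subsets of `[n]` not in `C`. -/
def complClutter (n d : ℕ) (C : Finset (Finset (Fin n))) : Finset (Finset (Fin n)) :=
  (Finset.powersetCard d (Finset.univ : Finset (Fin n))).filter (· ∉ C)

/-- The squarefree monomial `x_e = ∏_{i ∈ e} x_i`. -/
noncomputable def xMon (𝕂 : Type) [Field 𝕂] (n : ℕ) (e : Finset (Fin n)) :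
    MvPolynomial (Fin n) 𝕂 :=
  ∏ i ∈ e, X i

/-- The circuit ideal `I_C` of a clutter `C`, generated by the monomials `x_e`, `e ∈ C`. -/
noncomputable def circuitIdeal (𝕂 : Type) [Field 𝕂] (n : ℕ) (C : Finset (Finset (Fin n))) :
    Ideal (MvPolynomial (Fin n) 𝕂) :=
  Ideal.span (xMon 𝕂 n '' ↑C)

/-- An ideal is generated by a subset of the variables `{x_1,…,x_n}`. -/
def GeneratedByVariables (𝕂 : Type) [Field 𝕂] (n : ℕ) (I : Ideal (MvPolynomial (Fin n) 𝕂)) :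
    Prop :=
  ∃ S : Set (Fin n), I = Ideal.span ((fun i => (X i : MvPolynomial (Fin n) 𝕂)) '' S)

noncomputable def ind (n : ℕ) (e : Finset (Fin n)) : Fin n →₀ ℕ := ∑ k ∈ e, Finsupp.single k 1

lemma ind_apply (n : ℕ) (e : Finset (Fin n)) (k : Fin n) :
    ind n e k = if k ∈ e then 1 else 0 := by
  classical
  simp [ind, Finsupp.finset_sum_apply, Finsupp.single_apply]

lemma ind_le_iff (n : ℕ) (e : Finset (Fin n)) (μ : Fin n →₀ ℕ) :
    ind n e ≤ μ ↔ ∀ k ∈ e, μ k ≠ 0 := by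
  rw [Finsupp.le_def]
  constructor
  · intro h k hk
    have := h k; rw [ind_apply] at this; simp [hk] at this; omega
  · intro h k
    rw [ind_apply]
    split
    · exact Nat.one_le_iff_ne_zero.2 (h k ‹_›)
    · exact Nat.zero_le _

lemma xMon_eq (𝕂 : Type) [Field 𝕂] (n : ℕ) (e : Finset (Fin n)) :
    xMon 𝕂 n e = monomial (ind n e) 1 := by
  classical
  rw [xMon, ind]
  induction e using Finset.induction with
  | empty => simp
  | @insert a s h ih =>
    rw [Finset.prod_insert h, Finset.sum_insert h, ih, X, monomial_mul, one_mul]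

lemma mem_circuitIdeal (𝕂 : Type) [Field 𝕂] (n : ℕ) (C : Finset (Finset (Fin n)))
    (p : MvPolynomial (Fin n) 𝕂) :
    p ∈ circuitIdeal 𝕂 n C ↔ ∀ μ ∈ p.support, ∃ e ∈ C, ind n e ≤ μ := by
  have : xMon 𝕂 n '' ↑C = (fun s => monomial s (1:𝕂)) '' (ind n '' ↑C) := by
    rw [Set.image_image]
    apply Set.image_congr
    intro e _; exact xMon_eq 𝕂 n e
  rw [circuitIdeal, this, mem_ideal_span_monomial_image]
  constructor
  · intro h μ hμ
    obtain ⟨s, ⟨e, he, rfl⟩, hle⟩ := h μ hμ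
    exact ⟨e, he, hle⟩
  · intro h μ hμ
    obtain ⟨e, he, hle⟩ := h μ hμ
    exact ⟨ind n e, ⟨e, he, rfl⟩, hle⟩

lemma support_mul_monomial (𝕂 : Type) [Field 𝕂] (n : ℕ) (p : MvPolynomial (Fin n) 𝕂)
    (d ν : Fin n →₀ ℕ) :
    ν ∈ (p * monomial d (1:𝕂)).support ↔ ∃ μ ∈ p.support, ν = μ + d := by
  constructor
  · intro h
    rw [mem_support_iff, coeff_mul_monomial'] at h
    split at h
    · refine ⟨ν - d, ?_, ?_⟩
      · rw [mem_support_iff]; simpa using h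
      · exact (tsub_add_cancel_of_le ‹_›).symm
    · simp at h
  · rintro ⟨μ, hμ, rfl⟩
    rw [mem_support_iff, coeff_mul_monomial, mul_one]
    exact mem_support_iff.mp hμ

lemma mem_colon_iff (𝕂 : Type) [Field 𝕂] (n : ℕ) (C : Finset (Finset (Fin n)))
    (i j : Fin n) (p : MvPolynomial (Fin n) 𝕂) :
    p ∈ Submodule.colon (circuitIdeal 𝕂 n C)
        (Ideal.span {(X i * X j : MvPolynomial (Fin n) 𝕂)}) ↔
      ∀ μ ∈ p.support, ∃ e ∈ C,
        ind n e ≤ μ + (Finsupp.single i 1 + Finsupp.single j 1) := by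
  have hm : (X i * X j : MvPolynomial (Fin n) 𝕂)
      = monomial (Finsupp.single i 1 + Finsupp.single j 1) 1 := by
    rw [X, X, monomial_mul, one_mul]
  rw [Ideal.mem_colon_span_singleton, hm, mem_circuitIdeal]
  constructor
  · intro h μ hμ
    exact h _ ((support_mul_monomial 𝕂 n p _ _).mpr ⟨μ, hμ, rfl⟩)
  · intro h ν hν
    obtain ⟨μ, hμ, rfl⟩ := (support_mul_monomial 𝕂 n p _ _).mp hν
    exact h μ hμ

section Graph
variable (n : ℕ) (C : Finset (Finset (Fin n)))

lemma clique_of_pairs (S : Finset (Fin n))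
    (h : ∀ a b, a ∈ S → b ∈ S → a ≠ b → ({a, b} : Finset (Fin n)) ∈ C) :
    IsClutterClique n 2 C S := by
  right
  intro t ht hcard
  obtain ⟨x, y, hxy, rfl⟩ := Finset.card_eq_two.mp hcard
  exact h x y (ht (by simp)) (ht (by simp)) hxy

lemma pair_mem_of_clique {S : Finset (Fin n)} (h : IsClutterClique n 2 C S) {a b : Fin n}
    (ha : a ∈ S) (hb : b ∈ S) (hab : a ≠ b) : ({a, b} : Finset (Fin n)) ∈ C := by
  have hsub : ({a, b} : Finset (Fin n)) ⊆ S := by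
    simp [Finset.insert_subset_iff, ha, hb]
  rcases h with h | h
  · exfalso
    have := Finset.card_le_card hsub
    rw [Finset.card_pair hab] at this
    omega
  · exact h _ hsub (Finset.card_pair hab)

lemma exists_max_clique (T : Finset (Fin n)) (hT : IsClutterClique n 2 C T) :
    ∃ S, IsMaxClutterClique n 2 C S ∧ T ⊆ S := by
  classical
  obtain ⟨S, hS, hmax⟩ := Finset.exists_max_image
    (Finset.univ.powerset.filter (fun S => IsClutterClique n 2 C S ∧ T ⊆ S))
    Finset.card ⟨T, by simp [hT]⟩
  rw [Finset.mem_filter] at hS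
  refine ⟨S, ⟨hS.2.1, ?_⟩, hS.2.2⟩
  intro T' hT' hsub
  refine Finset.eq_of_subset_of_card_le hsub (hmax T' ?_)
  rw [Finset.mem_filter]
  exact ⟨by simp, hT', hS.2.2.trans hsub⟩

end Graph

section Main
variable {n : ℕ} {G : Finset (Finset (Fin n))} {i j : Fin n}

/-- the key combinatorial property: the common neighborhood of i and j is a clique -/
def PProp (n : ℕ) (G : Finset (Finset (Fin n))) (i j : Fin n) : Prop :=
  ∀ a b : Fin n, a ≠ i → a ≠ j → b ≠ i → b ≠ j →
    ({i, a} : Finset (Fin n)) ∈ G → ({j, a} : Finset (Fin n)) ∈ G →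
    ({i, b} : Finset (Fin n)) ∈ G → ({j, b} : Finset (Fin n)) ∈ G →
    a ≠ b → ({a, b} : Finset (Fin n)) ∈ G

lemma exposed_of_P (hij : i ≠ j) (he : ({i, j} : Finset (Fin n)) ∈ G)
    (hP : PProp n G i j) : IsExposedCircuit n 2 G {i, j} := by
  classical
  set M : Finset (Fin n) := insert i (insert j
    (Finset.univ.filter (fun k => k ≠ i ∧ k ≠ j ∧
      ({i, k} : Finset (Fin n)) ∈ G ∧ ({j, k} : Finset (Fin n)) ∈ G))) with hMdef
  have hmemM : ∀ k, k ∈ M ↔ k = i ∨ k = j ∨ (k ≠ i ∧ k ≠ j ∧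
      ({i, k} : Finset (Fin n)) ∈ G ∧ ({j, k} : Finset (Fin n)) ∈ G) := by
    intro k; simp [hMdef]
  have hMpairs : ∀ a b, a ∈ M → b ∈ M → a ≠ b → ({a, b} : Finset (Fin n)) ∈ G := by
    intro a b ha hb hab
    rw [hmemM] at ha hb
    rcases ha with rfl | rfl | ⟨ha1, ha2, ha3, ha4⟩ <;>
      rcases hb with rfl | rfl | ⟨hb1, hb2, hb3, hb4⟩
    · exact absurd rfl hab
    · exact he
    · exact hb3
    · rw [Finset.pair_comm]; exact he
    · exact absurd rfl hab
    · exact hb4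
    · rw [Finset.pair_comm]; exact ha3
    · rw [Finset.pair_comm]; exact ha4
    · exact hP a b ha1 ha2 hb1 hb2 ha3 ha4 hb3 hb4 hab
  have hMclique : IsClutterClique n 2 G M := clique_of_pairs n G M hMpairs
  -- every clique containing {i,j} is a subset of M
  have hsubM : ∀ T, IsClutterClique n 2 G T → ({i, j} : Finset (Fin n)) ⊆ T → T ⊆ M := by
    intro T hT hijT k hk
    rw [hmemM]
    by_cases hki : k = i
    · exact Or.inl hki
    by_cases hkj : k = j
    · exact Or.inr (Or.inl hkj)
    have hiT : i ∈ T := hijT (by simp)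
    have hjT : j ∈ T := hijT (by simp)
    exact Or.inr (Or.inr ⟨hki, hkj,
      pair_mem_of_clique n G hT hiT hk (Ne.symm hki),
      pair_mem_of_clique n G hT hjT hk (Ne.symm hkj)⟩)
  have hijM : ({i, j} : Finset (Fin n)) ⊆ M := by
    rw [hMdef]; intro x hx
    rcases Finset.mem_insert.mp hx with rfl | hx
    · exact Finset.mem_insert_self _ _
    · rw [Finset.mem_singleton] at hx; subst hx
      exact Finset.mem_insert_of_mem (Finset.mem_insert_self _ _)
  have hMmax : IsMaxClutterClique n 2 G M := by
    refine ⟨hMclique, fun T hT hsub => ?_⟩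
    exact Finset.Subset.antisymm hsub (hsubM T hT (hijM.trans hsub))
  refine ⟨he, M, ⟨hMmax, hijM⟩, ?_⟩
  rintro S ⟨hSmax, hijS⟩
  exact hSmax.2 M hMclique (hsubM S hSmax.1 hijS)

lemma P_of_exposed (hij : i ≠ j) (he : ({i, j} : Finset (Fin n)) ∈ G)
    (hexp : IsExposedCircuit n 2 G {i, j}) : PProp n G i j := by
  intro a b ha1 ha2 hb1 hb2 hia hja hib hjb hab
  by_contra hnab
  obtain ⟨_, S₀, hS₀, huniq⟩ := hexp
  -- {i,j,a} is a clique
  have hTa : IsClutterClique n 2 G ({i, j, a} : Finset (Fin n)) := by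
    apply clique_of_pairs
    intro x y hx hy hxy
    simp only [Finset.mem_insert, Finset.mem_singleton] at hx hy
    rcases hx with rfl | rfl | rfl <;> rcases hy with rfl | rfl | rfl
    · exact absurd rfl hxy
    · exact he
    · exact hia
    · rw [Finset.pair_comm]; exact he
    · exact absurd rfl hxy
    · exact hja
    · rw [Finset.pair_comm]; exact hia
    · rw [Finset.pair_comm]; exact hja
    · exact absurd rfl hxy
  have hTb : IsClutterClique n 2 G ({i, j, b} : Finset (Fin n)) := by
    apply clique_of_pairs
    intro x y hx hy hxy
    simp only [Finset.mem_insert, Finset.mem_singleton] at hx hy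
    rcases hx with rfl | rfl | rfl <;> rcases hy with rfl | rfl | rfl
    · exact absurd rfl hxy
    · exact he
    · exact hib
    · rw [Finset.pair_comm]; exact he
    · exact absurd rfl hxy
    · exact hjb
    · rw [Finset.pair_comm]; exact hib
    · rw [Finset.pair_comm]; exact hjb
    · exact absurd rfl hxy
  obtain ⟨Sa, hSa, hTaSa⟩ := exists_max_clique n G _ hTa
  obtain ⟨Sb, hSb, hTbSb⟩ := exists_max_clique n G _ hTb
  have hij_sub_a : ({i, j} : Finset (Fin n)) ⊆ Sa := by
    intro x hx
    apply hTaSa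
    simp only [Finset.mem_insert, Finset.mem_singleton] at hx ⊢
    tauto
  have hij_sub_b : ({i, j} : Finset (Fin n)) ⊆ Sb := by
    intro x hx
    apply hTbSb
    simp only [Finset.mem_insert, Finset.mem_singleton] at hx ⊢
    tauto
  have heqa := huniq Sa ⟨hSa, hij_sub_a⟩
  have heqb := huniq Sb ⟨hSb, hij_sub_b⟩
  subst heqa
  have haS : a ∈ Sb := by rw [heqb]; exact hTaSa (by simp)
  have hbS : b ∈ Sb := hTbSb (by simp)
  exact hnab (pair_mem_of_clique n G hSb.1 haS hbS hab)

end Main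

section Bridge
variable {n : ℕ}

lemma val3 (a i j k : Fin n) :
    ((Finsupp.single a 1 + (Finsupp.single i 1 + Finsupp.single j 1)) : Fin n →₀ ℕ) k ≠ 0 ↔
      (k = a ∨ k = i ∨ k = j) := by
  rw [Finsupp.add_apply, Finsupp.add_apply, Finsupp.single_apply, Finsupp.single_apply,
    Finsupp.single_apply]
  rcases eq_or_ne a k with h1 | h1 <;> rcases eq_or_ne i k with h2 | h2 <;>
    rcases eq_or_ne j k with h3 | h3 <;> simp [h1, h2, h3, eq_comm]

lemma val2 (μ : Fin n →₀ ℕ) (i j k : Fin n) :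
    ((μ + (Finsupp.single i 1 + Finsupp.single j 1)) : Fin n →₀ ℕ) k ≠ 0 ↔
      (μ k ≠ 0 ∨ k = i ∨ k = j) := by
  rw [Finsupp.add_apply, Finsupp.add_apply, Finsupp.single_apply, Finsupp.single_apply]
  rcases eq_or_ne i k with h2 | h2 <;> rcases eq_or_ne j k with h3 | h3 <;>
    simp [h2, h3, eq_comm]

lemma pair_mem_complClutter {G : Finset (Finset (Fin n))} {a b : Fin n} (h : a ≠ b)
    (hn : ({a, b} : Finset (Fin n)) ∉ G) : ({a, b} : Finset (Fin n)) ∈ complClutter n 2 G := by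
  simp [complClutter, Finset.mem_powersetCard_univ, Finset.card_pair h, hn]

lemma of_mem_complClutter {G : Finset (Finset (Fin n))} {e : Finset (Fin n)}
    (h : e ∈ complClutter n 2 G) : e.card = 2 ∧ e ∉ G := by
  simpa [complClutter, Finset.mem_powersetCard_univ] using h

variable {G : Finset (Finset (Fin n))} {i j : Fin n}

/-- if `a` is a common neighbor of `i` and `j`, no generator of the complement ideal
divides `x_a x_i x_j`. -/
lemma no_divisor (he : ({i, j} : Finset (Fin n)) ∈ G) {a : Fin n}
    (ha1 : a ≠ i) (ha2 : a ≠ j)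
    (hia : ({i, a} : Finset (Fin n)) ∈ G) (hja : ({j, a} : Finset (Fin n)) ∈ G) :
    ∀ e ∈ complClutter n 2 G,
      ¬ ind n e ≤ Finsupp.single a 1 + (Finsupp.single i 1 + Finsupp.single j 1) := by
  intro e hcc hle
  obtain ⟨hcard, hnot⟩ := of_mem_complClutter hcc
  obtain ⟨x, y, hxy, rfl⟩ := Finset.card_eq_two.mp hcard
  rw [ind_le_iff] at hle
  have hx := (val3 a i j x).mp (hle x (by simp))
  have hy := (val3 a i j y).mp (hle y (by simp))
  apply hnot
  rcases hx with rfl | rfl | rfl <;> rcases hy with rfl | rfl | rfl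
  · exact absurd rfl hxy
  · rw [Finset.pair_comm]; exact hia
  · rw [Finset.pair_comm]; exact hja
  · exact hia
  · exact absurd rfl hxy
  · exact he
  · exact hja
  · rw [Finset.pair_comm]; exact he
  · exact absurd rfl hxy

lemma P_of_gen (𝕂 : Type) [Field 𝕂] (he : ({i, j} : Finset (Fin n)) ∈ G)
    (hgen : GeneratedByVariables 𝕂 n
      (Submodule.colon (circuitIdeal 𝕂 n (complClutter n 2 G))
        (Ideal.span {(X i * X j : MvPolynomial (Fin n) 𝕂)}))) :
    PProp n G i j := by
  classical
  intro a b ha1 ha2 hb1 hb2 hia hja hib hjb hab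
  by_contra hnab
  obtain ⟨S, hS⟩ := hgen
  have hsupp : ((X a * X b : MvPolynomial (Fin n) 𝕂)).support
      = {Finsupp.single a 1 + Finsupp.single b 1} := by
    rw [X, X, monomial_mul, one_mul, support_monomial, if_neg one_ne_zero]
  -- X a * X b is in the colon ideal
  have hmem : (X a * X b : MvPolynomial (Fin n) 𝕂) ∈
      Submodule.colon (circuitIdeal 𝕂 n (complClutter n 2 G))
        (Ideal.span {(X i * X j : MvPolynomial (Fin n) 𝕂)}) := by
    rw [mem_colon_iff]
    intro μ hμ
    rw [hsupp, Finset.mem_singleton] at hμ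
    subst hμ
    refine ⟨{a, b}, pair_mem_complClutter hab hnab, ?_⟩
    rw [ind_le_iff]
    intro k hk
    rw [val2]
    left
    rw [Finsupp.add_apply, Finsupp.single_apply, Finsupp.single_apply]
    rcases Finset.mem_insert.mp hk with rfl | hk
    · simp
    · rw [Finset.mem_singleton] at hk; subst hk; simp
  -- but X a and X b are not
  have hnotina : (X a : MvPolynomial (Fin n) 𝕂) ∉
      Submodule.colon (circuitIdeal 𝕂 n (complClutter n 2 G))
        (Ideal.span {(X i * X j : MvPolynomial (Fin n) 𝕂)}) := by
    rw [mem_colon_iff]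
    intro h
    obtain ⟨e, hcc, hle⟩ := h (Finsupp.single a 1) (by rw [support_X]; simp)
    exact no_divisor he ha1 ha2 hia hja e hcc hle
  have hnotinb : (X b : MvPolynomial (Fin n) 𝕂) ∉
      Submodule.colon (circuitIdeal 𝕂 n (complClutter n 2 G))
        (Ideal.span {(X i * X j : MvPolynomial (Fin n) 𝕂)}) := by
    rw [mem_colon_iff]
    intro h
    obtain ⟨e, hcc, hle⟩ := h (Finsupp.single b 1) (by rw [support_X]; simp)
    exact no_divisor he hb1 hb2 hib hjb e hcc hle
  rw [hS, mem_ideal_span_X_image] at hmem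
  obtain ⟨k, hkS, hk⟩ := hmem (Finsupp.single a 1 + Finsupp.single b 1)
    (by rw [hsupp]; simp)
  have hXk : (X k : MvPolynomial (Fin n) 𝕂) ∈
      Submodule.colon (circuitIdeal 𝕂 n (complClutter n 2 G))
        (Ideal.span {(X i * X j : MvPolynomial (Fin n) 𝕂)}) := by
    rw [hS]
    exact Ideal.subset_span ⟨k, hkS, rfl⟩
  rw [Finsupp.add_apply, Finsupp.single_apply, Finsupp.single_apply] at hk
  rcases eq_or_ne a k with rfl | h1
  · exact hnotina hXk
  rcases eq_or_ne b k with rfl | h2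
  · exact hnotinb hXk
  simp [h1, h2] at hk

lemma gen_of_P (𝕂 : Type) [Field 𝕂] (hij : i ≠ j) (he : ({i, j} : Finset (Fin n)) ∈ G)
    (hP : PProp n G i j) :
    GeneratedByVariables 𝕂 n
      (Submodule.colon (circuitIdeal 𝕂 n (complClutter n 2 G))
        (Ideal.span {(X i * X j : MvPolynomial (Fin n) 𝕂)})) := by
  classical
  refine ⟨{k | k ≠ i ∧ k ≠ j ∧ (({i, k} : Finset (Fin n)) ∉ G ∨ ({j, k} : Finset (Fin n)) ∉ G)},
    ?_⟩
  ext p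
  rw [mem_colon_iff, mem_ideal_span_X_image]
  refine forall₂_congr fun μ hμ => ?_
  constructor
  · rintro ⟨e, hcc, hle⟩
    obtain ⟨hcard, hnot⟩ := of_mem_complClutter hcc
    obtain ⟨x, y, hxy, rfl⟩ := Finset.card_eq_two.mp hcard
    rw [ind_le_iff] at hle
    have hx := (val2 μ i j x).mp (hle x (by simp))
    have hy := (val2 μ i j y).mp (hle y (by simp))
    -- helper to close the "one endpoint is i or j" cases
    have one_case : ∀ x y : Fin n, x ≠ y → ({x, y} : Finset (Fin n)) ∉ G →
        (μ y ≠ 0 ∨ y = i ∨ y = j) → x = i ∨ x = j →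
        ∃ k ∈ {k | k ≠ i ∧ k ≠ j ∧
          (({i, k} : Finset (Fin n)) ∉ G ∨ ({j, k} : Finset (Fin n)) ∉ G)}, μ k ≠ 0 := by
      intro x y hxy hnot hy hxij
      have hyi : y ≠ i := by
        rintro rfl
        rcases hxij with rfl | rfl
        · exact hxy rfl
        · exact hnot (by rw [Finset.pair_comm]; exact he)
      have hyj : y ≠ j := by
        rintro rfl
        rcases hxij with rfl | rfl
        · exact hnot he
        · exact hxy rfl
      have hμy : μ y ≠ 0 := by tauto
      refine ⟨y, ⟨hyi, hyj, ?_⟩, hμy⟩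
      rcases hxij with rfl | rfl
      · exact Or.inl hnot
      · exact Or.inr hnot
    rcases hx with hμx | hxij
    · rcases hy with hμy | hyij
      · -- both x, y outside {i, j} in the μ-support sense; but they may still equal i or j
        by_cases hxi : x = i ∨ x = j
        · exact one_case x y hxy hnot (Or.inl hμy) hxi
        by_cases hyi : y = i ∨ y = j
        · rw [Finset.pair_comm] at hnot
          exact one_case y x hxy.symm hnot (Or.inl hμx) hyi
        push_neg at hxi hyi
        by_cases hxN : ({i, x} : Finset (Fin n)) ∈ G ∧ ({j, x} : Finset (Fin n)) ∈ G
        · by_cases hyN : ({i, y} : Finset (Fin n)) ∈ G ∧ ({j, y} : Finset (Fin n)) ∈ G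
          · exact absurd (hP x y hxi.1 hxi.2 hyi.1 hyi.2 hxN.1 hxN.2 hyN.1 hyN.2 hxy) hnot
          · rw [not_and_or] at hyN
            exact ⟨y, ⟨hyi.1, hyi.2, hyN⟩, hμy⟩
        · rw [not_and_or] at hxN
          exact ⟨x, ⟨hxi.1, hxi.2, hxN⟩, hμx⟩
      · exact one_case y x hxy.symm (by rwa [Finset.pair_comm] at hnot) (Or.inl hμx) hyij
    · exact one_case x y hxy hnot hy hxij
  · rintro ⟨k, ⟨hk1, hk2, hk3⟩, hμk⟩
    rcases hk3 with hk3 | hk3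
    · refine ⟨{i, k}, pair_mem_complClutter (Ne.symm hk1) hk3, ?_⟩
      rw [ind_le_iff]
      intro x hx
      rw [val2]
      rcases Finset.mem_insert.mp hx with rfl | hx
      · exact Or.inr (Or.inl rfl)
      · rw [Finset.mem_singleton] at hx; subst hx; exact Or.inl hμk
    · refine ⟨{j, k}, pair_mem_complClutter (Ne.symm hk2) hk3, ?_⟩
      rw [ind_le_iff]
      intro x hx
      rw [val2]
      rcases Finset.mem_insert.mp hx with rfl | hx
      · exact Or.inr (Or.inr rfl)
      · rw [Finset.mem_singleton] at hx; subst hx; exact Or.inl hμk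

end Bridge


/-- an edge `e = ij` of a graph `G` (a 2-clutter on `[n]`) is exposed
iff `x_i x_j` is a linear divisor for the edge ideal of the complement graph. -/
theorem exposed_edge_iff_linear_divisor (n : ℕ) (𝕂 : Type) [Field 𝕂]
    (G : Finset (Finset (Fin n))) (hG : ∀ s ∈ G, s.card = 2)
    (i j : Fin n) (hij : i ≠ j) (he : ({i, j} : Finset (Fin n)) ∈ G) :
    IsExposedCircuit n 2 G {i, j} ↔
      GeneratedByVariables 𝕂 n
        (Submodule.colon (circuitIdeal 𝕂 n (complClutter n 2 G))
          (Ideal.span {(X i * X j : MvPolynomial (Fin n) 𝕂)})) := by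
  constructor
  · intro h
    exact gen_of_P 𝕂 hij he (P_of_exposed hij he h)
  · intro h
    exact exposed_of_P hij he (P_of_gen 𝕂 he h)
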